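/- A continuous function f : I → ℝ is 3-convex if and only if for all a < b in I, (1/4) f(a) + (3/4) f((a+2b)/3) ≤ (1/(b-a)) ∫_a^b f(x) dx. -/

import Mathlib

set_option maxHeartbeats 1000000


noncomputable def divDiff3 (f : ℝ → ℝ) (x0 x1 x2 x3 : ℝ) : ℝ :=
  f x0 / ((x0 - x1) * (x0 - x2) * (x0 - x3)) +
  f x1 / ((x1 - x0) * (x1 - x2) * (x1 - x3)) +
  f x2 / ((x2 - x0) * (x2 - x1) * (x2 - x3)) +
  f x3 / ((x3 - x0) * (x3 - x1) * (x3 - x2))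

noncomputable def dd2 (f : ℝ → ℝ) (a b c : ℝ) : ℝ :=
  ((f c - f b) / (c - b) - (f b - f a) / (b - a)) / (c - a)

lemma dd3_eq_dd2_slope {f : ℝ → ℝ} {x0 x1 x2 x3 : ℝ} (h01 : x0 < x1) (h12 : x1 < x2)
    (h23 : x2 < x3) :
    divDiff3 f x0 x1 x2 x3 = dd2 (fun x => (f x - f x0) / (x - x0)) x1 x2 x3 := by
  have h1 : x1 - x0 ≠ 0 := by linarith
  have h2 : x2 - x0 ≠ 0 := by linarith
  have h3 : x3 - x0 ≠ 0 := by linarith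
  have h12' : x1 - x2 ≠ 0 := by linarith
  have h13 : x1 - x3 ≠ 0 := by linarith
  have h23' : x2 - x3 ≠ 0 := by linarith
  have h01' : x0 - x1 ≠ 0 := by linarith
  have h02 : x0 - x2 ≠ 0 := by linarith
  have h03 : x0 - x3 ≠ 0 := by linarith
  have h21 : x2 - x1 ≠ 0 := by linarith
  have h31 : x3 - x1 ≠ 0 := by linarith
  have h32 : x3 - x2 ≠ 0 := by linarith
  unfold divDiff3 dd2
  field_simp
  ring

lemma slope_le_of_dd2 {g : ℝ → ℝ} {y c x : ℝ} (hyc : y < c) (hcx : c < x)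
    (h : 0 ≤ dd2 g y c x) : (g c - g y) / (c - y) ≤ (g x - g c) / (x - c) := by
  unfold dd2 at h
  have hxy : (0:ℝ) < x - y := by linarith
  have h2 : 0 ≤ (g x - g c) / (x - c) - (g c - g y) / (c - y) := by
    have := mul_nonneg h hxy.le
    rwa [div_mul_cancel₀ _ (ne_of_gt hxy)] at this
  linarith

theorem forward_dir (I : Set ℝ) (hI : I.OrdConnected) (f : ℝ → ℝ)
    (hcont : ContinuousOn f I)
    (H : ∀ x0 x1 x2 x3 : ℝ, x0 ∈ I → x1 ∈ I → x2 ∈ I → x3 ∈ I →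
        x0 < x1 → x1 < x2 → x2 < x3 → 0 ≤ divDiff3 f x0 x1 x2 x3) :
    ∀ a b : ℝ, a ∈ I → b ∈ I → a < b →
        (1 / 4) * f a + (3 / 4) * f ((a + 2 * b) / 3) ≤
          (1 / (b - a)) * ∫ x in a..b, f x := by
  intro a b ha hb hab
  set c := (a + 2 * b) / 3 with hcdef
  have hac : a < c := by rw [hcdef]; linarith
  have hcb : c < b := by rw [hcdef]; linarith
  have hmemI : ∀ x, a ≤ x → x ≤ b → x ∈ I := fun x h1 h2 => hI.out ha hb ⟨h1, h2⟩
  have hc : c ∈ I := hmemI c hac.le hcb.le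
  set g : ℝ → ℝ := fun x => (f x - f a) / (x - a) with hgdef
  -- slope inequality from 3-convexity
  have key : ∀ y x, a < y → y < c → c < x → x ≤ b →
      (g c - g y) / (c - y) ≤ (g x - g c) / (x - c) := by
    intro y x hay hyc hcx hxb
    apply slope_le_of_dd2 hyc hcx
    rw [← dd3_eq_dd2_slope hay hyc hcx]
    exact H a y c x ha (hmemI y hay.le (by linarith)) hc (hmemI x (by linarith) hxb)
      hay hyc hcx
  set S : Set ℝ := (fun y => (g c - g y) / (c - y)) '' Set.Ioo a c with hSdef
  have hSne : S.Nonempty := ⟨_, ⟨(a + c) / 2, ⟨by linarith, by linarith⟩, rfl⟩⟩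
  have hSbdd : BddAbove S := by
    refine ⟨(g b - g c) / (b - c), ?_⟩
    rintro z ⟨y, ⟨hy1, hy2⟩, rfl⟩
    exact key y b hy1 hy2 hcb le_rfl
  set k : ℝ := sSup S with hkdef
  -- support line
  have hsupp : ∀ x ∈ Set.Ioc a b, g c + k * (x - c) ≤ g x := by
    intro x ⟨hax, hxb⟩
    rcases lt_trichotomy x c with hxc | rfl | hcx
    · have hle : (g c - g x) / (c - x) ≤ k :=
        le_csSup hSbdd ⟨x, ⟨hax, hxc⟩, rfl⟩
      have hcx0 : (0:ℝ) < c - x := by linarith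
      rw [div_le_iff₀ hcx0] at hle
      nlinarith
    · simp
    · have hle : k ≤ (g x - g c) / (x - c) := by
        apply csSup_le hSne
        rintro z ⟨y, ⟨hy1, hy2⟩, rfl⟩
        exact key y x hy1 hy2 hcx hxb
      have hxc0 : (0:ℝ) < x - c := by linarith
      rw [le_div_iff₀ hxc0] at hle
      nlinarith
  -- integral comparison
  have hIccI : Set.Icc a b ⊆ I := fun x hx => hmemI x hx.1 hx.2
  have hfc : ContinuousOn f (Set.Icc a b) := hcont.mono hIccI
  have hfi : IntervalIntegrable f MeasureTheory.volume a b := by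
    apply ContinuousOn.intervalIntegrable
    rwa [Set.uIcc_of_le hab.le]
  set L : ℝ → ℝ := fun x => f a + (x - a) * (g c + k * (x - c)) with hLdef
  have hLc : Continuous L := by fun_prop
  have hLi : IntervalIntegrable L MeasureTheory.volume a b := hLc.intervalIntegrable a b
  have hpt : ∀ x ∈ Set.Icc a b, L x ≤ f x := by
    intro x ⟨hax, hxb⟩
    rcases eq_or_lt_of_le hax with rfl | hax'
    · simp [hLdef]
    · have hx : g c + k * (x - c) ≤ g x := hsupp x ⟨hax', hxb⟩
      have hxa : (0:ℝ) < x - a := by linarith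
      have : (x - a) * (g c + k * (x - c)) ≤ (x - a) * g x :=
        mul_le_mul_of_nonneg_left hx hxa.le
      have hgx : (x - a) * g x = f x - f a := by
        rw [hgdef]; field_simp
      rw [hLdef]; dsimp only; linarith [this.trans_eq hgx]
  have hmono : ∫ x in a..b, L x ≤ ∫ x in a..b, f x :=
    intervalIntegral.integral_mono_on hab.le hLi hfi hpt
  -- compute ∫ L
  set A : ℝ → ℝ := fun x => f a * x + g c / 2 * (x - a) ^ 2 +
      k * (x ^ 3 / 3 - (a + c) / 2 * x ^ 2 + a * c * x) with hAdef
  have hDA : ∀ x ∈ Set.uIcc a b, HasDerivAt A (L x) x := by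
    intro x _
    have h1 : HasDerivAt (fun x : ℝ => f a * x) (f a) x := by
      simpa using (hasDerivAt_id x).const_mul (f a)
    have h2 : HasDerivAt (fun x : ℝ => g c / 2 * (x - a) ^ 2) (g c / 2 * (2 * (x - a))) x := by
      have h2' := (((hasDerivAt_id x).sub_const a).pow 2).const_mul (g c / 2)
      convert (config := { preTransparency := .default }) h2' using 1
      simp only [id_eq, Nat.cast_ofNat, pow_one]
      ring
    have h3 : HasDerivAt (fun x : ℝ => x ^ 3 / 3 - (a + c) / 2 * x ^ 2 + a * c * x)
        (x ^ 2 - (a + c) * x + a * c) x := by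
      have := ((hasDerivAt_pow 3 x).div_const 3).sub
        (((hasDerivAt_pow 2 x).const_mul ((a + c)/2)))
      have := this.add ((hasDerivAt_id x).const_mul (a * c))
      convert (config := { preTransparency := .default }) this using 1
      simp [id_eq]
      ring
    have := (h1.add h2).add (h3.const_mul k)
    convert (config := { preTransparency := .default }) this using 1
    rw [hLdef]
    simp only [id_eq]
    ring
  have hInt : ∫ x in a..b, L x = A b - A a :=
    intervalIntegral.integral_eq_sub_of_hasDerivAt hDA hLi
  have hAval : A b - A a = (b - a) * f a + g c * (b - a) ^ 2 / 2 := by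
    rw [hAdef]; dsimp only; rw [hcdef]; ring
  have hgc : g c * (b - a) ^ 2 / 2 = 3 / 4 * (b - a) * (f c - f a) := by
    rw [hgdef]
    dsimp only
    have hca : c - a ≠ 0 := by linarith
    field_simp
    rw [hcdef]
    ring
  have hfinal : (b - a) * ((1 / 4) * f a + (3 / 4) * f c) ≤ ∫ x in a..b, f x := by
    calc (b - a) * ((1 / 4) * f a + (3 / 4) * f c)
        = (b - a) * f a + 3 / 4 * (b - a) * (f c - f a) := by ring
      _ = A b - A a := by rw [hAval, hgc]
      _ = ∫ x in a..b, L x := hInt.symm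
      _ ≤ ∫ x in a..b, f x := hmono
  have hba : (0:ℝ) < b - a := by linarith
  calc (1 / 4) * f a + (3 / 4) * f c ≤ (∫ x in a..b, f x) / (b - a) := by
        rw [le_div_iff₀ hba]; linarith
    _ = (1 / (b - a)) * ∫ x in a..b, f x := by rw [one_div, div_eq_inv_mul]


noncomputable def Pm (g : ℝ → ℝ) (x : ℝ) : ℝ := ∫ t in (0:ℝ)..x, g t

noncomputable def St (h : ℝ) (g : ℝ → ℝ) (x : ℝ) : ℝ := h⁻¹ * (Pm g (x + h) - Pm g x)

noncomputable def Dh (h : ℝ) (g : ℝ → ℝ) (x : ℝ) : ℝ := h⁻¹ * (g (x + h) - g x)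

noncomputable def Ef (g : ℝ → ℝ) (a b : ℝ) : ℝ :=
  (∫ x in a..b, g x) - (b - a) * (g a / 4 + 3 / 4 * g ((a + 2 * b) / 3))

lemma hasDerivAt_Pm {g : ℝ → ℝ} (hg : Continuous g) (x : ℝ) : HasDerivAt (Pm g) (g x) x :=
  intervalIntegral.integral_hasDerivAt_right (hg.intervalIntegrable 0 x)
    hg.stronglyMeasurable.stronglyMeasurableAtFilter hg.continuousAt

lemma continuous_Pm {g : ℝ → ℝ} (hg : Continuous g) : Continuous (Pm g) :=
  Differentiable.continuous (fun x => (hasDerivAt_Pm hg x).differentiableAt)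

lemma hasDerivAt_St {g : ℝ → ℝ} (hg : Continuous g) (h x : ℝ) :
    HasDerivAt (St h g) (Dh h g x) x := by
  have h1 : HasDerivAt (fun y : ℝ => Pm g (y + h)) (g (x + h)) x :=
    HasDerivAt.comp_add_const x h (hasDerivAt_Pm hg (x + h))
  exact ((h1.sub (hasDerivAt_Pm hg x)).const_mul h⁻¹ : _)

lemma continuous_St {g : ℝ → ℝ} (hg : Continuous g) (h : ℝ) : Continuous (St h g) := by
  have : Differentiable ℝ (St h g) := fun x => (hasDerivAt_St hg h x).differentiableAt
  exact this.continuous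

lemma continuous_Dh {g : ℝ → ℝ} (hg : Continuous g) (h : ℝ) : Continuous (Dh h g) := by
  unfold Dh; fun_prop

lemma hasDerivAt_Dh {φ φ' : ℝ → ℝ} (hφ : ∀ x, HasDerivAt φ (φ' x) x) (h x : ℝ) :
    HasDerivAt (Dh h φ) (Dh h φ' x) x := by
  have h1 : HasDerivAt (fun y : ℝ => φ (y + h)) (φ' (x + h)) x :=
    HasDerivAt.comp_add_const x h (hφ (x + h))
  exact ((h1.sub (hφ x)).const_mul h⁻¹ : _)

lemma Pm_sub {g : ℝ → ℝ} (hg : Continuous g) (u v : ℝ) :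
    Pm g v - Pm g u = ∫ x in u..v, g x := by
  unfold Pm
  rw [← intervalIntegral.integral_interval_sub_left (hg.intervalIntegrable 0 v)
    (hg.intervalIntegrable 0 u)]

lemma integral_shift (g : ℝ → ℝ) (u h : ℝ) :
    (∫ s in (0:ℝ)..h, g (u + s)) = ∫ x in u..u + h, g x := by
  rw [intervalIntegral.integral_comp_add_left g u]
  norm_num

lemma st_eq_integral {g : ℝ → ℝ} (hg : Continuous g) (h x : ℝ) :
    St h g x = h⁻¹ * ∫ s in (0:ℝ)..h, g (x + s) := by
  rw [St, Pm_sub hg, integral_shift]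

lemma ef_st {g : ℝ → ℝ} (hg : Continuous g) (h a b : ℝ) :
    Ef (St h g) a b = h⁻¹ * ∫ s in (0:ℝ)..h, Ef g (a + s) (b + s) := by
  have hPc : Continuous (Pm g) := continuous_Pm hg
  have hP2c : Continuous (Pm (Pm g)) := continuous_Pm hPc
  set c := (a + 2 * b) / 3 with hc
  have hEf : ∀ s : ℝ, Ef g (a + s) (b + s) =
      (Pm g (b + s) - Pm g (a + s)) - (b - a) * (g (a + s) / 4 + 3 / 4 * g (c + s)) := by
    intro s
    have hnode : ((a + s) + 2 * (b + s)) / 3 = c + s := by rw [hc]; ring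
    unfold Ef
    rw [hnode, ← Pm_sub hg]
    ring
  have e2 : ∀ u : ℝ, (∫ s in (0:ℝ)..h, g (u + s)) = Pm g (u + h) - Pm g u := by
    intro u; rw [integral_shift g u h]; exact (Pm_sub hg u (u + h)).symm
  have e1 : ∀ u : ℝ, (∫ s in (0:ℝ)..h, Pm g (u + s)) = Pm (Pm g) (u + h) - Pm (Pm g) u := by
    intro u; rw [integral_shift (Pm g) u h]; exact (Pm_sub hPc u (u + h)).symm
  have i1 : ∀ u : ℝ, IntervalIntegrable (fun s => Pm g (u + s)) MeasureTheory.volume 0 h := by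
    intro u; exact (hPc.comp (by fun_prop)).intervalIntegrable 0 h
  have i2 : ∀ u : ℝ, IntervalIntegrable (fun s => g (u + s)) MeasureTheory.volume 0 h := by
    intro u; exact (hg.comp (by fun_prop)).intervalIntegrable 0 h
  have RHS : (∫ s in (0:ℝ)..h, Ef g (a + s) (b + s)) =
      ((Pm (Pm g) (b + h) - Pm (Pm g) b) - (Pm (Pm g) (a + h) - Pm (Pm g) a))
        - (b - a) * ((Pm g (a + h) - Pm g a) / 4 + 3 / 4 * (Pm g (c + h) - Pm g c)) := by
    simp only [hEf]
    rw [intervalIntegral.integral_sub ((i1 b).sub (i1 a))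
      (((((i2 a).div_const 4)).add (((i2 c).const_mul (3/4)))).const_mul (b - a)),
      intervalIntegral.integral_sub (i1 b) (i1 a),
      intervalIntegral.integral_const_mul,
      intervalIntegral.integral_add ((i2 a).div_const 4) ((i2 c).const_mul (3/4)),
      intervalIntegral.integral_div, intervalIntegral.integral_const_mul, e1, e1, e2, e2]
  -- LHS
  have hSti : IntervalIntegrable (St h g) MeasureTheory.volume a b :=
    (continuous_St hg h).intervalIntegrable a b
  have L1 : (∫ x in a..b, St h g x) = h⁻¹ *
      ((Pm (Pm g) (b + h) - Pm (Pm g) (a + h)) - (Pm (Pm g) b - Pm (Pm g) a)) := by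
    unfold St
    rw [intervalIntegral.integral_const_mul,
      intervalIntegral.integral_sub
        (Continuous.intervalIntegrable (by fun_prop : Continuous fun x : ℝ => Pm g (x + h)) a b)
        (hPc.intervalIntegrable a b),
      intervalIntegral.integral_comp_add_right (fun x => Pm g x) h,
      ← Pm_sub hPc a b, ← Pm_sub hPc (a + h) (b + h)]
  have hSta : St h g a = h⁻¹ * (Pm g (a + h) - Pm g a) := rfl
  have hStc : St h g ((a + 2 * b) / 3) = h⁻¹ * (Pm g (c + h) - Pm g c) := rfl
  have LHSdef : Ef (St h g) a b = (∫ x in a..b, St h g x)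
      - (b - a) * (St h g a / 4 + 3 / 4 * St h g ((a + 2 * b) / 3)) := rfl
  rw [LHSdef, L1, hSta, hStc, RHS]
  ring

lemma ef_st_nonneg {g : ℝ → ℝ} (hg : Continuous g) {h : ℝ} (hh : 0 < h) {u v : ℝ}
    (H : ∀ a b, u ≤ a → a < b → b ≤ v → 0 ≤ Ef g a b) :
    ∀ a b, u ≤ a → a < b → b ≤ v - h → 0 ≤ Ef (St h g) a b := by
  intro a b hua hab hbv
  rw [ef_st hg h a b]
  apply mul_nonneg (by positivity)
  apply intervalIntegral.integral_nonneg hh.le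
  intro s hs
  exact H (a + s) (b + s) (by linarith [hs.1]) (by linarith) (by linarith [hs.2])

lemma hasDerivAt_cpow (c t : ℝ) (n : ℕ) (x : ℝ) :
    HasDerivAt (fun x : ℝ => c * (x - t) ^ n) (c * n * (x - t) ^ (n - 1)) x := by
  have := (((hasDerivAt_id x).sub_const t).pow n).const_mul c
  convert (config := { preTransparency := .default }) this using 1
  simp only [id_eq, mul_one]
  ring

lemma nonneg_of_hasDerivAt {φ φ' : ℝ → ℝ} (hd : ∀ x, HasDerivAt φ (φ' x) x)
    {p q : ℝ} (hpq : p ≤ q) (h0 : φ p = 0) (hnn : ∀ x ∈ Set.Icc p q, 0 ≤ φ' x) :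
    ∀ x ∈ Set.Icc p q, 0 ≤ φ x := by
  have hmono : MonotoneOn φ (Set.Icc p q) := by
    apply monotoneOn_of_deriv_nonneg (convex_Icc p q)
      (Differentiable.continuous fun x => (hd x).differentiableAt).continuousOn
      (fun x _ => ((hd x).differentiableAt).differentiableWithinAt)
    intro x hx
    rw [(hd x).deriv]
    exact hnn x (interior_subset hx)
  intro x hx
  have := hmono (Set.left_mem_Icc.mpr hpq) hx hx.1
  rw [h0] at this
  exact this

lemma third_deriv_nonneg {G d1 d2 d3 : ℝ → ℝ}
    (h1 : ∀ x, HasDerivAt G (d1 x) x) (h2 : ∀ x, HasDerivAt d1 (d2 x) x)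
    (h3 : ∀ x, HasDerivAt d2 (d3 x) x) (hc3 : Continuous d3)
    {u v : ℝ} (H : ∀ a b, u ≤ a → a < b → b ≤ v → 0 ≤ Ef G a b)
    {t : ℝ} (hut : u ≤ t) (htv : t < v) : 0 ≤ d3 t := by
  by_contra hneg
  push_neg at hneg
  set ε := -d3 t with hεdef
  have hεpos : 0 < ε := by simp [hεdef]; linarith
  set η := ε / 35 with hηdef
  have hηpos : 0 < η := by positivity
  obtain ⟨δ0, hδ0pos, hδ0⟩ := Metric.continuousAt_iff.mp hc3.continuousAt η hηpos
  set δ := min (δ0 / 2) (v - t) with hδdef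
  have hδpos : 0 < δ := lt_min (by linarith) (by linarith)
  have hδv : t + δ ≤ v := by
    have := min_le_right (δ0 / 2) (v - t); linarith
  have hbound : ∀ x ∈ Set.Icc t (t + δ), |d3 x - d3 t| ≤ η := by
    intro x hx
    have hd : dist x t < δ0 := by
      rw [Real.dist_eq, abs_of_nonneg (by linarith [hx.1])]
      have := min_le_left (δ0 / 2) (v - t)
      linarith [hx.2]
    have := hδ0 hd
    rw [Real.dist_eq] at this
    exact this.le
  set M := d3 t + η with hMdef
  set m := d3 t - η with hmdef
  -- upper bound on G
  have hD2 : ∀ x, HasDerivAt (fun x => d2 t + M * (x - t) - d2 x) (M - d3 x) x := by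
    intro x
    have hp : HasDerivAt (fun x : ℝ => d2 t + M * (x - t)) M x := by
      have := (hasDerivAt_cpow M t 1 x).const_add (d2 t)
      convert (config := { preTransparency := .default }) this using 1
      · funext y; simp
      · simp
    exact hp.sub (h3 x)
  have step2 : ∀ x ∈ Set.Icc t (t + δ), 0 ≤ d2 t + M * (x - t) - d2 x := by
    apply nonneg_of_hasDerivAt hD2 (by linarith) (by simp)
    intro x hx
    have := hbound x hx
    have := abs_le.mp this
    simp only [hMdef]; linarith [this.1, this.2]
  have hD1 : ∀ x, HasDerivAt (fun x => d1 t + d2 t * (x - t) + M * (x - t) ^ 2 / 2 - d1 x)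
      (d2 t + M * (x - t) - d2 x) x := by
    intro x
    have hp1 := (hasDerivAt_cpow (d2 t) t 1 x).const_add (d1 t)
    have hp2 := (hasDerivAt_cpow (M / 2) t 2 x)
    have := (hp1.add hp2).sub (h2 x)
    convert (config := { preTransparency := .default }) this using 2 <;> push_cast [Pi.add_apply, Pi.sub_apply] <;> ring
  have step1 : ∀ x ∈ Set.Icc t (t + δ),
      0 ≤ d1 t + d2 t * (x - t) + M * (x - t) ^ 2 / 2 - d1 x := by
    apply nonneg_of_hasDerivAt hD1 (by linarith) (by simp)
    exact step2
  have hD0 : ∀ x, HasDerivAt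
      (fun x => G t + d1 t * (x - t) + d2 t * (x - t) ^ 2 / 2 + M * (x - t) ^ 3 / 6 - G x)
      (d1 t + d2 t * (x - t) + M * (x - t) ^ 2 / 2 - d1 x) x := by
    intro x
    have hp1 := (hasDerivAt_cpow (d1 t) t 1 x).const_add (G t)
    have hp2 := hasDerivAt_cpow (d2 t / 2) t 2 x
    have hp3 := hasDerivAt_cpow (M / 6) t 3 x
    have := ((hp1.add hp2).add hp3).sub (h1 x)
    convert (config := { preTransparency := .default }) this using 2 <;> push_cast [Pi.add_apply, Pi.sub_apply] <;> ring
  have hup : ∀ x ∈ Set.Icc t (t + δ),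
      0 ≤ G t + d1 t * (x - t) + d2 t * (x - t) ^ 2 / 2 + M * (x - t) ^ 3 / 6 - G x := by
    apply nonneg_of_hasDerivAt hD0 (by linarith) (by simp)
    exact step1
  -- lower bound on G
  have hL2 : ∀ x, HasDerivAt (fun x => d2 x - (d2 t + m * (x - t))) (d3 x - m) x := by
    intro x
    have hp : HasDerivAt (fun x : ℝ => d2 t + m * (x - t)) m x := by
      have := (hasDerivAt_cpow m t 1 x).const_add (d2 t)
      convert (config := { preTransparency := .default }) this using 1
      · funext y; simp
      · simp
    exact (h3 x).sub hp
  have stepL2 : ∀ x ∈ Set.Icc t (t + δ), 0 ≤ d2 x - (d2 t + m * (x - t)) := by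
    apply nonneg_of_hasDerivAt hL2 (by linarith) (by simp)
    intro x hx
    have := abs_le.mp (hbound x hx)
    simp only [hmdef]; linarith [this.1]
  have hL1 : ∀ x, HasDerivAt
      (fun x => d1 x - (d1 t + d2 t * (x - t) + m * (x - t) ^ 2 / 2))
      (d2 x - (d2 t + m * (x - t))) x := by
    intro x
    have hp1 := (hasDerivAt_cpow (d2 t) t 1 x).const_add (d1 t)
    have hp2 := (hasDerivAt_cpow (m / 2) t 2 x)
    have := (h2 x).sub (hp1.add hp2)
    convert (config := { preTransparency := .default }) this using 2 <;> push_cast [Pi.add_apply, Pi.sub_apply] <;> ring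
  have stepL1 : ∀ x ∈ Set.Icc t (t + δ),
      0 ≤ d1 x - (d1 t + d2 t * (x - t) + m * (x - t) ^ 2 / 2) := by
    apply nonneg_of_hasDerivAt hL1 (by linarith) (by simp)
    exact stepL2
  have hL0 : ∀ x, HasDerivAt
      (fun x => G x - (G t + d1 t * (x - t) + d2 t * (x - t) ^ 2 / 2 + m * (x - t) ^ 3 / 6))
      (d1 x - (d1 t + d2 t * (x - t) + m * (x - t) ^ 2 / 2)) x := by
    intro x
    have hp1 := (hasDerivAt_cpow (d1 t) t 1 x).const_add (G t)
    have hp2 := hasDerivAt_cpow (d2 t / 2) t 2 x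
    have hp3 := hasDerivAt_cpow (m / 6) t 3 x
    have := (h1 x).sub ((hp1.add hp2).add hp3)
    convert (config := { preTransparency := .default }) this using 2 <;> push_cast [Pi.add_apply, Pi.sub_apply] <;> ring
  have hlo : ∀ x ∈ Set.Icc t (t + δ),
      0 ≤ G x - (G t + d1 t * (x - t) + d2 t * (x - t) ^ 2 / 2 + m * (x - t) ^ 3 / 6) := by
    apply nonneg_of_hasDerivAt hL0 (by linarith) (by simp)
    exact stepL1
  -- assemble contradiction
  have hGc : Continuous G := Differentiable.continuous fun x => (h1 x).differentiableAt
  have hEnn := H t (t + δ) hut (by linarith) hδv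
  set QM : ℝ → ℝ := fun x => G t + d1 t * (x - t) + d2 t * (x - t) ^ 2 / 2 + M * (x - t) ^ 3 / 6
    with hQM
  have hintG : (∫ x in t..(t + δ), G x) ≤ ∫ x in t..(t + δ), QM x := by
    apply intervalIntegral.integral_mono_on (by linarith)
      (hGc.intervalIntegrable _ _) ((by fun_prop : Continuous QM).intervalIntegrable _ _)
    intro x hx
    have := hup x hx
    simp only [hQM]
    linarith
  set R : ℝ → ℝ := fun x => G t * x + d1 t / 2 * (x - t) ^ 2 + d2 t / 6 * (x - t) ^ 3
      + M / 24 * (x - t) ^ 4 with hR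
  have hRint : (∫ x in t..(t + δ), QM x) = R (t + δ) - R t := by
    apply intervalIntegral.integral_eq_sub_of_hasDerivAt
    · intro x _
      have hp0 : HasDerivAt (fun x : ℝ => G t * x) (G t) x := by
        simpa using (hasDerivAt_id x).const_mul (G t)
      have hp1 := hasDerivAt_cpow (d1 t / 2) t 2 x
      have hp2 := hasDerivAt_cpow (d2 t / 6) t 3 x
      have hp3 := hasDerivAt_cpow (M / 24) t 4 x
      have hcomb := ((hp0.add hp1).add hp2).add hp3
      have heq : QM x = G t + d1 t / 2 * ↑(2:ℕ) * (x - t) ^ (2 - 1) + d2 t / 6 * ↑(3:ℕ) * (x - t) ^ (3 - 1)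
          + M / 24 * ↑(4:ℕ) * (x - t) ^ (4 - 1) := by
        simp only [hQM]; push_cast; ring
      rw [hR, heq]
      exact hcomb
    · exact (by fun_prop : Continuous QM).intervalIntegrable _ _
  have hnode : (t + 2 * (t + δ)) / 3 = t + 2 * δ / 3 := by ring
  have hnodemem : t + 2 * δ / 3 ∈ Set.Icc t (t + δ) := by
    constructor <;> [linarith; linarith]
  have hGnode := hlo _ hnodemem
  have hEfle : Ef G t (t + δ) ≤ δ ^ 4 * (M / 24 - m / 27) := by
    have hEdef : Ef G t (t + δ) = (∫ x in t..(t+δ), G x)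
        - ((t + δ) - t) * (G t / 4 + 3 / 4 * G (t + 2 * δ / 3)) := by
      rw [Ef, hnode]
    rw [hEdef]
    have h1' : G (t + 2 * δ / 3) ≥ G t + d1 t * (2 * δ / 3) + d2 t * (2 * δ / 3) ^ 2 / 2
        + m * (2 * δ / 3) ^ 3 / 6 := by
      have := hGnode
      have he : (t + 2 * δ / 3 - t) = 2 * δ / 3 := by ring
      rw [he] at this
      linarith
    calc (∫ x in t..(t+δ), G x) - ((t + δ) - t) * (G t / 4 + 3 / 4 * G (t + 2 * δ / 3))
        ≤ (∫ x in t..(t+δ), QM x) - ((t + δ) - t) * (G t / 4 + 3 / 4 *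
            (G t + d1 t * (2 * δ / 3) + d2 t * (2 * δ / 3) ^ 2 / 2 + m * (2 * δ / 3) ^ 3 / 6)) := by
          have hd : (0:ℝ) < (t + δ) - t := by linarith
          nlinarith [hintG, h1']
      _ = δ ^ 4 * (M / 24 - m / 27) := by rw [hRint, hR]; ring
  have hcoef : M / 24 - m / 27 = d3 t / 216 + 17 * η / 216 := by
    simp only [hMdef, hmdef]; ring
  have hneg' : δ ^ 4 * (M / 24 - m / 27) < 0 := by
    rw [hcoef]
    have h4 : (0:ℝ) < δ ^ 4 := by positivity
    have : d3 t / 216 + 17 * η / 216 < 0 := by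
      rw [hηdef, hεdef]; linarith
    nlinarith
  linarith

lemma dd3_nonneg_of_smooth {G d1 d2 d3 : ℝ → ℝ}
    (h1 : ∀ x, HasDerivAt G (d1 x) x) (h2 : ∀ x, HasDerivAt d1 (d2 x) x)
    (h3 : ∀ x, HasDerivAt d2 (d3 x) x)
    {u v : ℝ} (hd3 : ∀ x ∈ Set.Ioo u v, 0 ≤ d3 x)
    {p0 p1 p2 p3 : ℝ} (hp0 : u ≤ p0) (h01 : p0 < p1) (h12 : p1 < p2) (h23 : p2 < p3)
    (hp3 : p3 ≤ v) : 0 ≤ divDiff3 G p0 p1 p2 p3 := by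
  have hd1c : Continuous d1 := Differentiable.continuous fun x => (h2 x).differentiableAt
  have hd2c : Continuous d2 := Differentiable.continuous fun x => (h3 x).differentiableAt
  have hmono : MonotoneOn d2 (Set.Ioo u v) := by
    apply monotoneOn_of_deriv_nonneg (convex_Ioo u v) hd2c.continuousOn
      (fun x _ => (h3 x).differentiableAt.differentiableWithinAt)
    intro x hx
    rw [(h3 x).deriv]
    exact hd3 x (by rwa [interior_Ioo] at hx)
  have hconv : ConvexOn ℝ (Set.Icc u v) d1 := by
    apply MonotoneOn.convexOn_of_deriv (convex_Icc u v) hd1c.continuousOn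
      (fun x _ => (h2 x).differentiableAt.differentiableWithinAt)
    intro x hx y hy hxy
    rw [interior_Icc] at hx hy
    rw [(h2 x).deriv, (h2 y).deriv]
    exact hmono hx hy hxy
  set φ : ℝ → ℝ → ℝ := fun p t => d1 ((p - p0) * t + p0) with hφ
  have hφc : ∀ p, Continuous (φ p) := by
    intro p; apply hd1c.comp; fun_prop
  have hI : ∀ p, p0 < p → (G p - G p0) / (p - p0) = ∫ t in (0:ℝ)..1, φ p t := by
    intro p hp
    have hG : (∫ x in p0..p, d1 x) = G p - G p0 :=
      intervalIntegral.integral_eq_sub_of_hasDerivAt (fun x _ => h1 x)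
        (hd1c.intervalIntegrable _ _)
    have hsub := intervalIntegral.smul_integral_comp_mul_add (a := (0:ℝ)) (b := 1)
      (f := d1) (p - p0) p0
    rw [mul_zero, zero_add, mul_one, sub_add_cancel, hG] at hsub
    have hne : p - p0 ≠ 0 := by linarith
    rw [smul_eq_mul] at hsub
    rw [hφ]
    field_simp [← hsub]
    exact hsub.symm
  have hdd : divDiff3 G p0 p1 p2 p3 =
      (((∫ t in (0:ℝ)..1, φ p3 t) - ∫ t in (0:ℝ)..1, φ p2 t) / (p3 - p2) -
       ((∫ t in (0:ℝ)..1, φ p2 t) - ∫ t in (0:ℝ)..1, φ p1 t) / (p2 - p1)) / (p3 - p1) := by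
    rw [dd3_eq_dd2_slope h01 h12 h23]
    unfold dd2
    rw [← hI p1 h01, ← hI p2 (h01.trans h12), ← hI p3 ((h01.trans h12).trans h23)]
  have hii : ∀ p, IntervalIntegrable (φ p) MeasureTheory.volume 0 1 :=
    fun p => (hφc p).intervalIntegrable 0 1
  have hsplit : (((∫ t in (0:ℝ)..1, φ p3 t) - ∫ t in (0:ℝ)..1, φ p2 t) / (p3 - p2) -
       ((∫ t in (0:ℝ)..1, φ p2 t) - ∫ t in (0:ℝ)..1, φ p1 t) / (p2 - p1)) / (p3 - p1)
      = ∫ t in (0:ℝ)..1,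
          ((φ p3 t - φ p2 t) / (p3 - p2) - (φ p2 t - φ p1 t) / (p2 - p1)) / (p3 - p1) := by
    rw [intervalIntegral.integral_div, intervalIntegral.integral_sub
        (((hii p3).sub (hii p2)).div_const _) (((hii p2).sub (hii p1)).div_const _),
      intervalIntegral.integral_div, intervalIntegral.integral_div,
      intervalIntegral.integral_sub (hii p3) (hii p2),
      intervalIntegral.integral_sub (hii p2) (hii p1)]
  rw [hdd, hsplit]
  apply intervalIntegral.integral_nonneg (by norm_num)
  intro t ht
  rcases eq_or_lt_of_le ht.1 with rfl | htpos
  · simp [hφ]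
  · set q1 := (p1 - p0) * t + p0 with hq1def
    set q2 := (p2 - p0) * t + p0 with hq2def
    set q3 := (p3 - p0) * t + p0 with hq3def
    have ht1 : t ≤ 1 := ht.2
    have hq12 : q1 < q2 := by rw [hq1def, hq2def]; nlinarith
    have hq23 : q2 < q3 := by rw [hq2def, hq3def]; nlinarith
    have hq1m : q1 ∈ Set.Icc u v := by
      constructor
      · rw [hq1def]; nlinarith
      · rw [hq1def]; nlinarith
    have hq3m : q3 ∈ Set.Icc u v := by
      constructor
      · rw [hq3def]; nlinarith
      · rw [hq3def]; nlinarith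
    have hs := hconv.slope_mono_adjacent hq1m hq3m hq12 hq23
    have e12 : (φ p2 t - φ p1 t) / (p2 - p1) = t * ((d1 q2 - d1 q1) / (q2 - q1)) := by
      have hq : q2 - q1 = t * (p2 - p1) := by rw [hq1def, hq2def]; ring
      have hne : p2 - p1 ≠ 0 := by linarith
      have htne : t ≠ 0 := ne_of_gt htpos
      have hb1 : φ p1 t = d1 q1 := rfl
      have hb2 : φ p2 t = d1 q2 := rfl
      rw [hb1, hb2, hq]
      field_simp
    have e23 : (φ p3 t - φ p2 t) / (p3 - p2) = t * ((d1 q3 - d1 q2) / (q3 - q2)) := by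
      have hq : q3 - q2 = t * (p3 - p2) := by rw [hq2def, hq3def]; ring
      have hne : p3 - p2 ≠ 0 := by linarith
      have htne : t ≠ 0 := ne_of_gt htpos
      have hb2 : φ p2 t = d1 q2 := rfl
      have hb3 : φ p3 t = d1 q3 := rfl
      rw [hb2, hb3, hq]
      field_simp
    rw [e12, e23]
    apply div_nonneg _ (by linarith)
    have := sub_nonneg.mpr hs
    nlinarith

lemma st_window {g : ℝ → ℝ} (hg : Continuous g) {C ε h : ℝ} (hh : 0 < h) (hε : 0 ≤ ε)
    {p q : ℝ} (hb : ∀ z ∈ Set.Icc p q, |g z - C| ≤ ε) :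
    ∀ x ∈ Set.Icc p (q - h), |St h g x - C| ≤ ε := by
  intro x hx
  have hrep : St h g x - C = h⁻¹ * ∫ s in (0:ℝ)..h, (g (x + s) - C) := by
    rw [st_eq_integral hg,
      intervalIntegral.integral_sub
        (Continuous.intervalIntegrable (by fun_prop : Continuous fun s : ℝ => g (x + s)) 0 h)
        intervalIntegrable_const,
      intervalIntegral.integral_const, smul_eq_mul]
    field_simp
    ring
  have hbnd : |∫ s in (0:ℝ)..h, (g (x + s) - C)| ≤ ε * |h - 0| := by
    have := intervalIntegral.norm_integral_le_of_norm_le_const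
      (f := fun s => g (x + s) - C) (a := (0:ℝ)) (b := h) (C := ε) ?_
    · simpa [Real.norm_eq_abs] using this
    · intro s hs
      rw [Set.uIoc_of_le hh.le] at hs
      have hmem : x + s ∈ Set.Icc p q := ⟨by linarith [hx.1, hs.1.le], by linarith [hx.2, hs.2]⟩
      simpa [Real.norm_eq_abs] using hb _ hmem
  rw [hrep, abs_mul, abs_inv, abs_of_pos hh]
  rw [sub_zero, abs_of_pos hh] at hbnd
  calc h⁻¹ * |∫ s in (0:ℝ)..h, (g (x + s) - C)| ≤ h⁻¹ * (ε * h) := by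
        apply mul_le_mul_of_nonneg_left hbnd (by positivity)
    _ = ε := by field_simp
    
lemma st3_window {g : ℝ → ℝ} (hg : Continuous g) {C ε h : ℝ} (hh : 0 < h) (hε : 0 ≤ ε)
    {p q : ℝ} (hb : ∀ z ∈ Set.Icc p q, |g z - C| ≤ ε) :
    ∀ x ∈ Set.Icc p (q - 3 * h), |St h (St h (St h g)) x - C| ≤ ε := by
  have w1 := st_window hg hh hε hb
  have w2 := st_window (continuous_St hg h) hh hε w1
  have w3 := st_window (continuous_St (continuous_St hg h) h) hh hε w2
  intro x hx
  exact w3 x ⟨hx.1, by linarith [hx.2]⟩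

lemma st3_tendsto_at {g : ℝ → ℝ} (hg : Continuous g) (p : ℝ) {y : ℝ → ℝ}
    (hy : ∀ h, 0 < h → p - 3 * h ≤ y h ∧ y h ≤ p) :
    Filter.Tendsto (fun h => St h (St h (St h g)) (y h)) (nhdsWithin 0 (Set.Ioi 0))
      (nhds (g p)) := by
  rw [Metric.tendsto_nhdsWithin_nhds]
  intro ε hε
  obtain ⟨δ1, hδ1, hcont⟩ := Metric.continuousAt_iff.mp hg.continuousAt (ε / 2) (by positivity)
  refine ⟨δ1 / 3, by positivity, ?_⟩
  intro h hh hdist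
  have hh0 : (0:ℝ) < h := hh
  rw [Real.dist_eq, sub_zero, abs_of_pos hh0] at hdist
  have hb : ∀ z ∈ Set.Icc (p - 3 * h) (p + 3 * h), |g z - g p| ≤ ε / 2 := by
    intro z hz
    have hdz : dist z p < δ1 := by
      rw [Real.dist_eq]
      have : |z - p| ≤ 3 * h := abs_le.mpr ⟨by linarith [hz.1], by linarith [hz.2]⟩
      linarith
    have := hcont hdz
    rw [Real.dist_eq] at this
    exact this.le
  have hw := st3_window hg hh0 (by positivity : (0:ℝ) ≤ ε / 2) hb (y h)
    ⟨by linarith [(hy h hh0).1], by linarith [(hy h hh0).2]⟩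
  rw [Real.dist_eq]
  calc |St h (St h (St h g)) (y h) - g p| ≤ ε / 2 := hw
    _ < ε := by linarith

theorem converse_dir (I : Set ℝ) (hI : I.OrdConnected) (f : ℝ → ℝ) (hcont : ContinuousOn f I)
    (H : ∀ a b : ℝ, a ∈ I → b ∈ I → a < b →
        (1 / 4) * f a + (3 / 4) * f ((a + 2 * b) / 3) ≤
          (1 / (b - a)) * ∫ x in a..b, f x) :
    ∀ x0 x1 x2 x3 : ℝ, x0 ∈ I → x1 ∈ I → x2 ∈ I → x3 ∈ I →
        x0 < x1 → x1 < x2 → x2 < x3 → 0 ≤ divDiff3 f x0 x1 x2 x3 := by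
  intro x0 x1 x2 x3 h0 h1 h2 h3 h01 h12 h23
  have h03 : x0 ≤ x3 := by linarith
  have hmemI : ∀ x, x0 ≤ x → x ≤ x3 → x ∈ I := fun x ha hb => hI.out h0 h3 ⟨ha, hb⟩
  set π : ℝ → ℝ := fun x => max x0 (min x x3) with hπ
  have hπc : Continuous π := by fun_prop
  have hπmem : ∀ x, π x ∈ Set.Icc x0 x3 := by
    intro x
    exact ⟨le_max_left _ _, max_le h03 (min_le_right _ _)⟩
  set e : ℝ → ℝ := fun x => f (π x) with he
  have hec : Continuous e :=
    ContinuousOn.comp_continuous (hcont.mono fun z hz => hmemI z hz.1 hz.2) hπc hπmem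
  have heq : ∀ x ∈ Set.Icc x0 x3, e x = f x := by
    intro x hx
    have : π x = x := by
      rw [hπ]; simp only
      rw [min_eq_left hx.2, max_eq_right hx.1]
    rw [he]; simp only [this]
  have base : ∀ a b, x0 ≤ a → a < b → b ≤ x3 → 0 ≤ Ef e a b := by
    intro a b ha hab hb
    have haI := hmemI a ha (le_trans hab.le hb)
    have hbI := hmemI b (le_trans ha hab.le) hb
    have hH := H a b haI hbI hab
    have hba : (0:ℝ) < b - a := by linarith
    have hint : (∫ x in a..b, e x) = ∫ x in a..b, f x := by
      apply intervalIntegral.integral_congr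
      intro z hz
      rw [Set.uIcc_of_le hab.le] at hz
      exact heq z ⟨le_trans ha hz.1, le_trans hz.2 hb⟩
    have hea : e a = f a := heq a ⟨ha, by linarith⟩
    have hen : e ((a + 2 * b) / 3) = f ((a + 2 * b) / 3) := heq _ ⟨by linarith, by linarith⟩
    rw [Ef, hint, hea, hen]
    have hmul := mul_le_mul_of_nonneg_left hH hba.le
    have hr : (b - a) * ((1 / (b - a)) * ∫ x in a..b, f x) = ∫ x in a..b, f x := by
      field_simp
    rw [hr] at hmul
    have heq2 : (b - a) * ((1 / 4) * f a + (3 / 4) * f ((a + 2 * b) / 3)) =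
        (b - a) * (f a / 4 + 3 / 4 * f ((a + 2 * b) / 3)) := by ring
    rw [heq2] at hmul
    linarith
  have key : ∀ h : ℝ, 0 < h → 3 * h < x3 - x2 →
      0 ≤ divDiff3 (St h (St h (St h e))) x0 x1 x2 (x3 - 3 * h) := by
    intro h hh hh3
    have hE1c : Continuous (St h e) := continuous_St hec h
    have hE2c : Continuous (St h (St h e)) := continuous_St hE1c h
    have hd1 : ∀ x, HasDerivAt (St h (St h (St h e))) (Dh h (St h (St h e)) x) x :=
      hasDerivAt_St hE2c h
    have hd2 : ∀ x, HasDerivAt (Dh h (St h (St h e))) (Dh h (Dh h (St h e)) x) x :=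
      hasDerivAt_Dh (hasDerivAt_St hE1c h) h
    have hd3 : ∀ x, HasDerivAt (Dh h (Dh h (St h e))) (Dh h (Dh h (Dh h e)) x) x :=
      hasDerivAt_Dh (hasDerivAt_Dh (hasDerivAt_St hec h) h) h
    have hc3 : Continuous (Dh h (Dh h (Dh h e))) :=
      continuous_Dh (continuous_Dh (continuous_Dh hec h) h) h
    have P1 := ef_st_nonneg hec hh base
    have P2 := ef_st_nonneg hE1c hh P1
    have P3 := ef_st_nonneg hE2c hh P2
    have P3' : ∀ a b, x0 ≤ a → a < b → b ≤ x3 - 3 * h → 0 ≤ Ef (St h (St h (St h e))) a b := by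
      intro a b ha hab hb
      exact P3 a b ha hab (by linarith)
    have hd3nn : ∀ x ∈ Set.Ioo x0 (x3 - 3 * h), 0 ≤ Dh h (Dh h (Dh h e)) x := by
      intro x hx
      exact third_deriv_nonneg hd1 hd2 hd3 hc3 P3' hx.1.le hx.2
    exact dd3_nonneg_of_smooth hd1 hd2 hd3 hd3nn (le_refl x0) h01 h12 (by linarith)
      (le_refl _)
  -- limit as h → 0+
  have hv0 : Filter.Tendsto (fun h : ℝ => St h (St h (St h e)) x0) (nhdsWithin 0 (Set.Ioi 0))
      (nhds (e x0)) := st3_tendsto_at hec x0 (y := fun _ => x0)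
      (fun h hh => ⟨by linarith, le_refl _⟩)
  have hv1 : Filter.Tendsto (fun h : ℝ => St h (St h (St h e)) x1) (nhdsWithin 0 (Set.Ioi 0))
      (nhds (e x1)) := st3_tendsto_at hec x1 (y := fun _ => x1)
      (fun h hh => ⟨by linarith, le_refl _⟩)
  have hv2 : Filter.Tendsto (fun h : ℝ => St h (St h (St h e)) x2) (nhdsWithin 0 (Set.Ioi 0))
      (nhds (e x2)) := st3_tendsto_at hec x2 (y := fun _ => x2)
      (fun h hh => ⟨by linarith, le_refl _⟩)
  have hv3 : Filter.Tendsto (fun h : ℝ => St h (St h (St h e)) (x3 - 3 * h))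
      (nhdsWithin 0 (Set.Ioi 0)) (nhds (e x3)) := st3_tendsto_at hec x3
      (y := fun h => x3 - 3 * h)
      (fun h hh => ⟨le_refl _, by show x3 - 3 * h ≤ x3; linarith⟩)
  have hz : Filter.Tendsto (fun h : ℝ => x3 - 3 * h) (nhdsWithin 0 (Set.Ioi 0)) (nhds x3) := by
    have : Filter.Tendsto (fun h : ℝ => x3 - 3 * h) (nhds 0) (nhds (x3 - 3 * 0)) :=
      (continuous_const.sub (continuous_const.mul continuous_id)).tendsto 0
    simpa using this.mono_left nhdsWithin_le_nhds
  have n01 : x0 - x1 ≠ 0 := sub_ne_zero.mpr (ne_of_lt h01)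
  have n02 : x0 - x2 ≠ 0 := sub_ne_zero.mpr (by intro hcon; nlinarith)
  have n03 : x0 - x3 ≠ 0 := sub_ne_zero.mpr (by intro hcon; nlinarith)
  have n10 : x1 - x0 ≠ 0 := sub_ne_zero.mpr (by intro hcon; nlinarith)
  have n12 : x1 - x2 ≠ 0 := sub_ne_zero.mpr (ne_of_lt h12)
  have n13 : x1 - x3 ≠ 0 := sub_ne_zero.mpr (by intro hcon; nlinarith)
  have n20 : x2 - x0 ≠ 0 := sub_ne_zero.mpr (by intro hcon; nlinarith)
  have n21 : x2 - x1 ≠ 0 := sub_ne_zero.mpr (by intro hcon; nlinarith)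
  have n23 : x2 - x3 ≠ 0 := sub_ne_zero.mpr (ne_of_lt h23)
  have n30 : x3 - x0 ≠ 0 := sub_ne_zero.mpr (by intro hcon; nlinarith)
  have n31 : x3 - x1 ≠ 0 := sub_ne_zero.mpr (by intro hcon; nlinarith)
  have n32 : x3 - x2 ≠ 0 := sub_ne_zero.mpr (by intro hcon; nlinarith)
  have hTend : Filter.Tendsto
      (fun h : ℝ => divDiff3 (St h (St h (St h e))) x0 x1 x2 (x3 - 3 * h))
      (nhdsWithin 0 (Set.Ioi 0)) (nhds (divDiff3 e x0 x1 x2 x3)) := by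
    unfold divDiff3
    refine ((Filter.Tendsto.add (Filter.Tendsto.add ?_ ?_) ?_).add ?_)
    · exact hv0.div
        ((tendsto_const_nhds.mul tendsto_const_nhds).mul (tendsto_const_nhds.sub hz))
        (mul_ne_zero (mul_ne_zero n01 n02) n03)
    · exact hv1.div
        ((tendsto_const_nhds.mul tendsto_const_nhds).mul (tendsto_const_nhds.sub hz))
        (mul_ne_zero (mul_ne_zero n10 n12) n13)
    · exact hv2.div
        ((tendsto_const_nhds.mul tendsto_const_nhds).mul (tendsto_const_nhds.sub hz))
        (mul_ne_zero (mul_ne_zero n20 n21) n23)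
    · exact hv3.div
        (((hz.sub tendsto_const_nhds).mul (hz.sub tendsto_const_nhds)).mul
          (hz.sub tendsto_const_nhds))
        (mul_ne_zero (mul_ne_zero n30 n31) n32)
  have hFnn : ∀ᶠ h in nhdsWithin (0:ℝ) (Set.Ioi 0),
      0 ≤ divDiff3 (St h (St h (St h e))) x0 x1 x2 (x3 - 3 * h) := by
    have hmem : Set.Ioo (0:ℝ) ((x3 - x2) / 3) ∈ nhdsWithin (0:ℝ) (Set.Ioi 0) :=
      Ioo_mem_nhdsGT_of_mem ⟨le_refl 0, by linarith⟩
    filter_upwards [hmem] with h hh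
    exact key h hh.1 (by have := hh.2; linarith)
  have hge : 0 ≤ divDiff3 e x0 x1 x2 x3 := ge_of_tendsto hTend hFnn
  have hfe : divDiff3 e x0 x1 x2 x3 = divDiff3 f x0 x1 x2 x3 := by
    unfold divDiff3
    rw [heq x0 ⟨le_refl _, h03⟩, heq x1 ⟨by linarith, by linarith⟩,
      heq x2 ⟨by linarith, by linarith⟩, heq x3 ⟨h03, le_refl _⟩]
  rw [← hfe]
  exact hge

theorem stmt14 (I : Set ℝ) (hI : I.OrdConnected) (f : ℝ → ℝ)
    (hcont : ContinuousOn f I) :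
    (∀ x0 x1 x2 x3 : ℝ, x0 ∈ I → x1 ∈ I → x2 ∈ I → x3 ∈ I →
        x0 < x1 → x1 < x2 → x2 < x3 → 0 ≤ divDiff3 f x0 x1 x2 x3) ↔
      ∀ a b : ℝ, a ∈ I → b ∈ I → a < b →
        (1 / 4) * f a + (3 / 4) * f ((a + 2 * b) / 3) ≤
          (1 / (b - a)) * ∫ x in a..b, f x := by
  constructor
  · exact forward_dir I hI f hcont
  · exact converse_dir I hI f hcont
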